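/- There exists a smallest joint root χ̂ ∈ [0,∞)^M of the functions f̊^m, m = 1,…,M (i.e., f̊^m(χ̂) = 0 for all m and χ̂ ≤ χ̄ componentwise for every joint root χ̄), and χ̂ ∈ P̊₀. Moreover, χ* ∈ P₀ and χ* is a joint root of the functions f^m, m = 1,…,M. -/

import Mathlib

open MeasureTheory Filter Set Topology
open scoped ENNReal

/-- The fire-sales iteration `σ_(k)` (number of sold shares, not normalized by `n`):
`σ_(0) = 0` and `σ_(k+1)^m = ∑_i x_i^m ρ((ℓ_i + x_i · h(σ_(k)/n)) / c_i)`. -/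
noncomputable def sigmaIter {M : ℕ} (ρ : ℝ → ℝ) (h : (Fin M → ℝ) → Fin M → ℝ)
    (n : ℕ) (x : Fin n → Fin M → ℝ) (c : Fin n → ℝ≥0∞) (ℓ : Fin n → ℝ) :
    ℕ → Fin M → ℝ
  | 0 => 0
  | k + 1 => fun m =>
      ∑ i, x i m *
        ρ ((ℓ i + ∑ m', x i m' * h (fun m'' => sigmaIter ρ h n x c ℓ k m'' / (n : ℝ)) m') /
          (c i).toReal)

/-- `f^m(χ) = E[X^m ρ((L + X·h(χ))/C)] − χ^m`. -/
noncomputable def fFS {Ω : Type*} [MeasureSpace Ω] {M : ℕ} (ρ : ℝ → ℝ)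
    (h : (Fin M → ℝ) → Fin M → ℝ) (X : Ω → Fin M → ℝ) (C : Ω → ℝ≥0∞) (L : Ω → ℝ)
    (m : Fin M) (χ : Fin M → ℝ) : ℝ :=
  (∫ ω, X ω m * ρ ((L ω + ∑ m', X ω m' * h χ m') / (C ω).toReal)) - χ m

/-- `P = ∩_m {χ ∈ [0,∞)^M : f^m(χ) ≥ 0}`. -/
noncomputable def PsetFS {Ω : Type*} [MeasureSpace Ω] {M : ℕ} (ρ : ℝ → ℝ)
    (h : (Fin M → ℝ) → Fin M → ℝ) (X : Ω → Fin M → ℝ) (C : Ω → ℝ≥0∞) (L : Ω → ℝ) :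
    Set (Fin M → ℝ) :=
  {χ | (∀ m, 0 ≤ χ m) ∧ ∀ m, 0 ≤ fFS ρ h X C L m χ}

/-- `P₀`, the largest connected subset of `P` containing `0`. -/
noncomputable def P0FS {Ω : Type*} [MeasureSpace Ω] {M : ℕ} (ρ : ℝ → ℝ)
    (h : (Fin M → ℝ) → Fin M → ℝ) (X : Ω → Fin M → ℝ) (C : Ω → ℝ≥0∞) (L : Ω → ℝ) :
    Set (Fin M → ℝ) :=
  connectedComponentIn (PsetFS ρ h X C L) 0

/-- `χ*`, defined by `(χ*)^m = sup_{χ ∈ P₀} χ^m`. -/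
noncomputable def chiStarFS {Ω : Type*} [MeasureSpace Ω] {M : ℕ} (ρ : ℝ → ℝ)
    (h : (Fin M → ℝ) → Fin M → ℝ) (X : Ω → Fin M → ℝ) (C : Ω → ℝ≥0∞) (L : Ω → ℝ) :
    Fin M → ℝ :=
  fun m => sSup ((fun χ => χ m) '' P0FS ρ h X C L)


lemma FS.Ioo01_mem : Ioo (0:ℝ) 1 ∈ 𝓝[>] (0:ℝ) :=
  Ioo_mem_nhdsGT_of_mem ⟨le_refl 0, zero_lt_one⟩

lemma FS.rhoc_zero (ρ ρc : ℝ → ℝ) (hρ_zero : ρ 0 = 0)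
    (hρc : Tendsto (fun ε => ρ ((1 - ε) * 0)) (𝓝[>] (0:ℝ)) (𝓝 (ρc 0))) : ρc 0 = 0 := by
  have h2 : Tendsto (fun ε : ℝ => ρ ((1 - ε) * 0)) (𝓝[>] (0:ℝ)) (𝓝 0) := by
    simpa [hρ_zero] using (tendsto_const_nhds : Tendsto (fun _ : ℝ => (0:ℝ)) (𝓝[>] (0:ℝ)) (𝓝 0))
  exact tendsto_nhds_unique hρc h2

lemma FS.rhoc_mem (ρ ρc : ℝ → ℝ) (hρ_mem : ∀ u ∈ Set.Ici (0:ℝ), ρ u ∈ Set.Icc (0:ℝ) 1)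
    (hρc : ∀ u : ℝ, 0 ≤ u → Tendsto (fun ε => ρ ((1 - ε) * u)) (𝓝[>] 0) (𝓝 (ρc u)))
    (u : ℝ) (hu : 0 ≤ u) : ρc u ∈ Set.Icc (0:ℝ) 1 := by
  have hev : ∀ᶠ ε in 𝓝[>] (0:ℝ), ρ ((1-ε)*u) ∈ Set.Icc (0:ℝ) 1 := by
    filter_upwards [FS.Ioo01_mem] with ε hε
    exact hρ_mem _ (mul_nonneg (by linarith [hε.2]) hu)
  exact ⟨ge_of_tendsto (hρc u hu) (hev.mono fun ε h => h.1),
    le_of_tendsto (hρc u hu) (hev.mono fun ε h => h.2)⟩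

lemma FS.rhoc_mono (ρ ρc : ℝ → ℝ) (hρ_mono : MonotoneOn ρ (Set.Ici 0))
    (hρc : ∀ u : ℝ, 0 ≤ u → Tendsto (fun ε => ρ ((1 - ε) * u)) (𝓝[>] 0) (𝓝 (ρc u))) :
    MonotoneOn ρc (Set.Ici 0) := by
  intro u hu v hv huv
  refine le_of_tendsto_of_tendsto (hρc u hu) (hρc v hv) ?_
  filter_upwards [FS.Ioo01_mem] with ε hε
  have h1 : (0:ℝ) ≤ 1 - ε := by linarith [hε.2]
  exact hρ_mono (mul_nonneg h1 hu) (mul_nonneg h1 hv) (mul_le_mul_of_nonneg_left huv h1)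

lemma FS.rho_le_rhoc (ρ ρc : ℝ → ℝ) (hρ_mono : MonotoneOn ρ (Set.Ici 0))
    (hρc : ∀ u : ℝ, 0 ≤ u → Tendsto (fun ε => ρ ((1 - ε) * u)) (𝓝[>] 0) (𝓝 (ρc u)))
    (v u : ℝ) (hv : 0 ≤ v) (hvu : v < u) : ρ v ≤ ρc u := by
  have hu : (0:ℝ) ≤ u := le_trans hv hvu.le
  have hT : Tendsto (fun ε : ℝ => (1 - ε) * u) (𝓝[>] (0:ℝ)) (𝓝 u) := by
    have : Tendsto (fun ε : ℝ => (1 - ε) * u) (𝓝 (0:ℝ)) (𝓝 ((1 - 0) * u)) := by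
      exact ((continuous_const.sub continuous_id).mul continuous_const).tendsto 0
    simpa using this.mono_left nhdsWithin_le_nhds
  refine ge_of_tendsto (hρc u hu) ?_
  filter_upwards [hT.eventually (eventually_gt_nhds hvu)] with ε hε
  exact hρ_mono hv (le_trans hv hε.le) hε.le

lemma FS.rhoc_leftcont (ρ ρc : ℝ → ℝ) (hρ_mono : MonotoneOn ρ (Set.Ici 0))
    (hρc : ∀ u : ℝ, 0 ≤ u → Tendsto (fun ε => ρ ((1 - ε) * u)) (𝓝[>] 0) (𝓝 (ρc u)))
    (u : ℝ) (hu : 0 ≤ u) (w : ℕ → ℝ) (hw0 : ∀ k, 0 ≤ w k) (hwu : ∀ k, w k ≤ u)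
    (hwT : Tendsto w atTop (𝓝 u)) :
    Tendsto (fun k => ρc (w k)) atTop (𝓝 (ρc u)) := by
  have hmono := FS.rhoc_mono ρ ρc hρ_mono hρc
  rcases eq_or_lt_of_le hu with h0 | hpos
  · have : ∀ k, w k = u := fun k => le_antisymm (hwu k) (h0 ▸ hw0 k)
    simpa [funext this] using (tendsto_const_nhds : Tendsto (fun _ : ℕ => ρc u) atTop (𝓝 (ρc u)))
  · refine tendsto_order.2 ⟨?_, ?_⟩
    · intro c hc
      have h1 : ∀ᶠ ε in 𝓝[>] (0:ℝ), c < ρ ((1 - ε) * u) :=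
        (hρc u hu).eventually (eventually_gt_nhds hc)
      obtain ⟨ε, hcε, hε⟩ := (h1.and FS.Ioo01_mem).exists
      have harg_lt : (1 - ε) * u < u := by nlinarith [hε.1, hε.2, hpos]
      have harg_nn : (0:ℝ) ≤ (1 - ε) * u := mul_nonneg (by linarith [hε.2]) hu
      filter_upwards [hwT.eventually (eventually_gt_nhds harg_lt)] with k hk
      exact lt_of_lt_of_le hcε (FS.rho_le_rhoc ρ ρc hρ_mono hρc _ _ harg_nn hk)
    · intro c hc
      filter_upwards with k
      exact lt_of_le_of_lt (hmono (hw0 k) hu (hwu k)) hc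
noncomputable def PhiFS {Ω : Type*} [MeasureSpace Ω] {M : ℕ} (r : ℝ → ℝ)
    (h : (Fin M → ℝ) → Fin M → ℝ) (X : Ω → Fin M → ℝ) (C : Ω → ℝ≥0∞) (L : Ω → ℝ)
    (χ : Fin M → ℝ) (m : Fin M) : ℝ :=
  ∫ ω, X ω m * r ((L ω + ∑ m', X ω m' * h χ m') / (C ω).toReal)

lemma fFS_eq_Phi {Ω : Type*} [MeasureSpace Ω] {M : ℕ} (r : ℝ → ℝ)
    (h : (Fin M → ℝ) → Fin M → ℝ) (X : Ω → Fin M → ℝ) (C : Ω → ℝ≥0∞) (L : Ω → ℝ)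
    (m : Fin M) (χ : Fin M → ℝ) :
    fFS r h X C L m χ = PhiFS r h X C L χ m - χ m := rfl

set_option linter.unusedSectionVars false

section FSaux
variable {Ω : Type*} [MeasureSpace Ω] [IsProbabilityMeasure (volume : Measure Ω)] {M : ℕ}
  {r : ℝ → ℝ} {h : (Fin M → ℝ) → Fin M → ℝ}
  {X : Ω → Fin M → ℝ} {C : Ω → ℝ≥0∞} {L : Ω → ℝ}

lemma FS.arg_nonneg (hX_nonneg : ∀ ω m, 0 ≤ X ω m) (hL_nonneg : ∀ ω, 0 ≤ L ω)
    {χ : Fin M → ℝ} (hχ : ∀ m', 0 ≤ h χ m') (ω : Ω) :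
    0 ≤ (L ω + ∑ m', X ω m' * h χ m') / (C ω).toReal := by
  apply div_nonneg _ ENNReal.toReal_nonneg
  exact add_nonneg (hL_nonneg ω) (Finset.sum_nonneg fun m' _ => mul_nonneg (hX_nonneg ω m') (hχ m'))

lemma FS.arg_mono (hX_nonneg : ∀ ω m, 0 ≤ X ω m)
    {χ χ' : Fin M → ℝ} (hχ : ∀ m', h χ m' ≤ h χ' m') (ω : Ω) :
    (L ω + ∑ m', X ω m' * h χ m') / (C ω).toReal
      ≤ (L ω + ∑ m', X ω m' * h χ' m') / (C ω).toReal := by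
  have hnum : (L ω + ∑ m', X ω m' * h χ m') ≤ (L ω + ∑ m', X ω m' * h χ' m') := by
    gcongr with m' _
    · exact hX_nonneg ω m'
    · exact hχ m'
  rw [div_eq_mul_inv, div_eq_mul_inv]
  exact mul_le_mul_of_nonneg_right hnum (inv_nonneg.2 ENNReal.toReal_nonneg)

lemma FS.integrand_meas (hr_mono : MonotoneOn r (Set.Ici 0))
    (hX_nonneg : ∀ ω m, 0 ≤ X ω m) (hL_nonneg : ∀ ω, 0 ≤ L ω)
    (hX_meas : ∀ m, Measurable fun ω => X ω m) (hC_meas : Measurable C) (hL_meas : Measurable L)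
    {χ : Fin M → ℝ} (hχ : ∀ m', 0 ≤ h χ m') (m : Fin M) :
    Measurable fun ω => X ω m * r ((L ω + ∑ m', X ω m' * h χ m') / (C ω).toReal) := by
  have hqmono : Monotone (fun u => r (max u 0)) := fun a b hab =>
    hr_mono (le_max_right a 0) (le_max_right b 0) (max_le_max hab le_rfl)
  have hg : Measurable fun ω => (L ω + ∑ m', X ω m' * h χ m') / (C ω).toReal := by
    exact (hL_meas.add (Finset.measurable_sum _ fun m' _ => (hX_meas m').mul_const _)).div
      hC_meas.ennreal_toReal
  have heq : (fun ω => X ω m * r ((L ω + ∑ m', X ω m' * h χ m') / (C ω).toReal))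
      = fun ω => X ω m * r (max ((L ω + ∑ m', X ω m' * h χ m') / (C ω).toReal) 0) := by
    funext ω
    rw [max_eq_left (FS.arg_nonneg (C := C) hX_nonneg hL_nonneg hχ ω)]
  rw [heq]
  exact (hX_meas m).mul (hqmono.measurable.comp hg)

lemma FS.integrand_int (hr_mono : MonotoneOn r (Set.Ici 0))
    (hr_mem : ∀ u ∈ Set.Ici (0:ℝ), r u ∈ Set.Icc (0:ℝ) 1)
    (hX_nonneg : ∀ ω m, 0 ≤ X ω m) (hL_nonneg : ∀ ω, 0 ≤ L ω)
    (hX_meas : ∀ m, Measurable fun ω => X ω m) (hC_meas : Measurable C) (hL_meas : Measurable L)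
    (hX_int : ∀ m, Integrable fun ω => X ω m)
    {χ : Fin M → ℝ} (hχ : ∀ m', 0 ≤ h χ m') (m : Fin M) :
    Integrable (fun ω => X ω m * r ((L ω + ∑ m', X ω m' * h χ m') / (C ω).toReal)) := by
  refine (hX_int m).mono'
    ((FS.integrand_meas hr_mono hX_nonneg hL_nonneg hX_meas hC_meas hL_meas hχ m).aestronglyMeasurable)
    (ae_of_all _ fun ω => ?_)
  have hmem := hr_mem _ (FS.arg_nonneg (C := C) hX_nonneg hL_nonneg hχ ω)
  rw [norm_mul, Real.norm_eq_abs, Real.norm_eq_abs, abs_of_nonneg (hX_nonneg ω m),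
    abs_of_nonneg hmem.1]
  calc X ω m * r _ ≤ X ω m * 1 := mul_le_mul_of_nonneg_left hmem.2 (hX_nonneg ω m)
  _ = X ω m := mul_one _

lemma FS.Phi_mono (hr_mono : MonotoneOn r (Set.Ici 0))
    (hr_mem : ∀ u ∈ Set.Ici (0:ℝ), r u ∈ Set.Icc (0:ℝ) 1)
    (hh_mono : ∀ m (χ χ' : Fin M → ℝ), (∀ m', 0 ≤ χ m') → (∀ m', χ m' ≤ χ' m') → h χ m ≤ h χ' m)
    (hh_mem : ∀ m (χ : Fin M → ℝ), (∀ m', 0 ≤ χ m') → h χ m ∈ Set.Icc (0:ℝ) 1)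
    (hX_nonneg : ∀ ω m, 0 ≤ X ω m) (hL_nonneg : ∀ ω, 0 ≤ L ω)
    (hX_meas : ∀ m, Measurable fun ω => X ω m) (hC_meas : Measurable C) (hL_meas : Measurable L)
    (hX_int : ∀ m, Integrable fun ω => X ω m)
    {χ χ' : Fin M → ℝ} (hχ0 : ∀ m', 0 ≤ χ m') (hχ0' : ∀ m', 0 ≤ χ' m')
    (hle : ∀ m', χ m' ≤ χ' m') (m : Fin M) :
    PhiFS r h X C L χ m ≤ PhiFS r h X C L χ' m := by
  have hhχ : ∀ m', 0 ≤ h χ m' := fun m' => (hh_mem m' χ hχ0).1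
  have hhχ' : ∀ m', 0 ≤ h χ' m' := fun m' => (hh_mem m' χ' hχ0').1
  refine integral_mono
    (FS.integrand_int hr_mono hr_mem hX_nonneg hL_nonneg hX_meas hC_meas hL_meas hX_int hhχ m)
    (FS.integrand_int hr_mono hr_mem hX_nonneg hL_nonneg hX_meas hC_meas hL_meas hX_int hhχ' m)
    (fun ω => ?_)
  refine mul_le_mul_of_nonneg_left ?_ (hX_nonneg ω m)
  exact hr_mono (FS.arg_nonneg (C := C) hX_nonneg hL_nonneg hhχ ω)
    (FS.arg_nonneg (C := C) hX_nonneg hL_nonneg hhχ' ω)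
    (FS.arg_mono hX_nonneg (fun m' => hh_mono m' χ χ' hχ0 hle) ω)

lemma FS.Phi_nonneg (hr_mem : ∀ u ∈ Set.Ici (0:ℝ), r u ∈ Set.Icc (0:ℝ) 1)
    (hX_nonneg : ∀ ω m, 0 ≤ X ω m) (hL_nonneg : ∀ ω, 0 ≤ L ω)
    {χ : Fin M → ℝ} (hχ : ∀ m', 0 ≤ h χ m') (m : Fin M) :
    0 ≤ PhiFS r h X C L χ m :=
  integral_nonneg fun ω => mul_nonneg (hX_nonneg ω m)
    (hr_mem _ (FS.arg_nonneg (C := C) hX_nonneg hL_nonneg hχ ω)).1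

lemma FS.Phi_le (hr_mono : MonotoneOn r (Set.Ici 0))
    (hr_mem : ∀ u ∈ Set.Ici (0:ℝ), r u ∈ Set.Icc (0:ℝ) 1)
    (hX_nonneg : ∀ ω m, 0 ≤ X ω m) (hL_nonneg : ∀ ω, 0 ≤ L ω)
    (hX_meas : ∀ m, Measurable fun ω => X ω m) (hC_meas : Measurable C) (hL_meas : Measurable L)
    (hX_int : ∀ m, Integrable fun ω => X ω m)
    {χ : Fin M → ℝ} (hχ : ∀ m', 0 ≤ h χ m') (m : Fin M) :
    PhiFS r h X C L χ m ≤ ∫ ω, X ω m := by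
  refine integral_mono
    (FS.integrand_int hr_mono hr_mem hX_nonneg hL_nonneg hX_meas hC_meas hL_meas hX_int hχ m)
    (hX_int m) (fun ω => ?_)
  have hmem := hr_mem _ (FS.arg_nonneg (C := C) hX_nonneg hL_nonneg hχ ω)
  calc X ω m * r _ ≤ X ω m * 1 := mul_le_mul_of_nonneg_left hmem.2 (hX_nonneg ω m)
  _ = X ω m := mul_one _

end FSaux
section FSaux2
variable {Ω : Type*} [MeasureSpace Ω] [IsProbabilityMeasure (volume : Measure Ω)] {M : ℕ}
  {r : ℝ → ℝ} {h : (Fin M → ℝ) → Fin M → ℝ}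
  {X : Ω → Fin M → ℝ} {C : Ω → ℝ≥0∞} {L : Ω → ℝ}

lemma FS.mem_Pset {χ : Fin M → ℝ} :
    χ ∈ PsetFS r h X C L ↔ (∀ m, 0 ≤ χ m) ∧ ∀ m, χ m ≤ PhiFS r h X C L χ m := by
  unfold PsetFS
  simp only [Set.mem_setOf_eq, fFS_eq_Phi, sub_nonneg]

lemma FS.zero_mem_Pset (hr_mem : ∀ u ∈ Set.Ici (0:ℝ), r u ∈ Set.Icc (0:ℝ) 1)
    (hh_mem : ∀ m (χ : Fin M → ℝ), (∀ m', 0 ≤ χ m') → h χ m ∈ Set.Icc (0:ℝ) 1)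
    (hX_nonneg : ∀ ω m, 0 ≤ X ω m) (hL_nonneg : ∀ ω, 0 ≤ L ω) :
    (0 : Fin M → ℝ) ∈ PsetFS r h X C L := by
  refine FS.mem_Pset.2 ⟨fun m => le_rfl, fun m => ?_⟩
  exact FS.Phi_nonneg hr_mem hX_nonneg hL_nonneg
    (fun m' => (hh_mem m' 0 fun _ => le_rfl).1) m

lemma FS.box_mem (hr_mono : MonotoneOn r (Set.Ici 0))
    (hr_mem : ∀ u ∈ Set.Ici (0:ℝ), r u ∈ Set.Icc (0:ℝ) 1)
    (hh_mono : ∀ m (χ χ' : Fin M → ℝ), (∀ m', 0 ≤ χ m') → (∀ m', χ m' ≤ χ' m') → h χ m ≤ h χ' m)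
    (hh_mem : ∀ m (χ : Fin M → ℝ), (∀ m', 0 ≤ χ m') → h χ m ∈ Set.Icc (0:ℝ) 1)
    (hX_nonneg : ∀ ω m, 0 ≤ X ω m) (hL_nonneg : ∀ ω, 0 ≤ L ω)
    (hX_meas : ∀ m, Measurable fun ω => X ω m) (hC_meas : Measurable C) (hL_meas : Measurable L)
    (hX_int : ∀ m, Integrable fun ω => X ω m)
    {χ ξ : Fin M → ℝ} (hχP : χ ∈ PsetFS r h X C L)
    (h1 : ∀ m, χ m ≤ ξ m) (h2 : ∀ m, ξ m ≤ PhiFS r h X C L χ m) :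
    ξ ∈ PsetFS r h X C L := by
  obtain ⟨hχ0, hχΦ⟩ := FS.mem_Pset.1 hχP
  have hξ0 : ∀ m, 0 ≤ ξ m := fun m => (hχ0 m).trans (h1 m)
  refine FS.mem_Pset.2 ⟨hξ0, fun m => (h2 m).trans ?_⟩
  exact FS.Phi_mono hr_mono hr_mem hh_mono hh_mem hX_nonneg hL_nonneg hX_meas hC_meas hL_meas
    hX_int hχ0 hξ0 h1 m

lemma FS.sup_mem (hr_mono : MonotoneOn r (Set.Ici 0))
    (hr_mem : ∀ u ∈ Set.Ici (0:ℝ), r u ∈ Set.Icc (0:ℝ) 1)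
    (hh_mono : ∀ m (χ χ' : Fin M → ℝ), (∀ m', 0 ≤ χ m') → (∀ m', χ m' ≤ χ' m') → h χ m ≤ h χ' m)
    (hh_mem : ∀ m (χ : Fin M → ℝ), (∀ m', 0 ≤ χ m') → h χ m ∈ Set.Icc (0:ℝ) 1)
    (hX_nonneg : ∀ ω m, 0 ≤ X ω m) (hL_nonneg : ∀ ω, 0 ≤ L ω)
    (hX_meas : ∀ m, Measurable fun ω => X ω m) (hC_meas : Measurable C) (hL_meas : Measurable L)
    (hX_int : ∀ m, Integrable fun ω => X ω m)
    {χ χ' : Fin M → ℝ} (hχP : χ ∈ PsetFS r h X C L) (hχP' : χ' ∈ PsetFS r h X C L) :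
    (fun m => max (χ m) (χ' m)) ∈ PsetFS r h X C L := by
  obtain ⟨hχ0, hχΦ⟩ := FS.mem_Pset.1 hχP
  obtain ⟨hχ0', hχΦ'⟩ := FS.mem_Pset.1 hχP'
  have hsup0 : ∀ m, (0:ℝ) ≤ max (χ m) (χ' m) := fun m => le_max_of_le_left (hχ0 m)
  refine FS.mem_Pset.2 ⟨hsup0, fun m => max_le ?_ ?_⟩
  · exact (hχΦ m).trans (FS.Phi_mono hr_mono hr_mem hh_mono hh_mem hX_nonneg hL_nonneg hX_meas
      hC_meas hL_meas hX_int hχ0 hsup0 (fun m' => le_max_left _ _) m)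
  · exact (hχΦ' m).trans (FS.Phi_mono hr_mono hr_mem hh_mono hh_mem hX_nonneg hL_nonneg hX_meas
      hC_meas hL_meas hX_int hχ0' hsup0 (fun m' => le_max_right _ _) m)

lemma FS.absorb {t : Set (Fin M → ℝ)} (ht : IsPreconnected t)
    (htP : t ⊆ PsetFS r h X C L) {y : Fin M → ℝ} (hyt : y ∈ t)
    (hy : y ∈ P0FS r h X C L) : t ⊆ P0FS r h X C L := by
  unfold P0FS at hy ⊢
  have h2 := ht.subset_connectedComponentIn hyt htP
  rw [connectedComponentIn_eq hy]
  exact h2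

lemma FS.Icc_preconnected (χ ξ : Fin M → ℝ) : IsPreconnected (Set.Icc χ ξ) :=
  (convex_Icc χ ξ).isPreconnected

end FSaux2
/-- There is a smallest joint root `χ̂ ∈ P̊₀` of the lower semicontinuous modifications `f̊^m`;
moreover `χ* ∈ P₀` and `χ*` is a joint root of the `f^m`. -/
theorem stmt_12 {Ω : Type*} [MeasureSpace Ω] [IsProbabilityMeasure (volume : Measure Ω)] {M : ℕ}
    (ρ : ℝ → ℝ) (hρ_mono : MonotoneOn ρ (Set.Ici 0))
    (hρ_rc : ∀ u ∈ Set.Ici (0:ℝ), ContinuousWithinAt ρ (Set.Ici u) u)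
    (hρ_zero : ρ 0 = 0) (hρ_mem : ∀ u ∈ Set.Ici (0:ℝ), ρ u ∈ Set.Icc (0:ℝ) 1)
    (hρ_plateau : ∀ u : ℝ, 1 ≤ u → ρ u = ρ 1)
    (ρc : ℝ → ℝ)
    (hρc : ∀ u : ℝ, 0 ≤ u → Tendsto (fun ε => ρ ((1 - ε) * u)) (𝓝[>] 0) (𝓝 (ρc u)))
    (h : (Fin M → ℝ) → Fin M → ℝ)
    (hh_cont : ∀ m, ContinuousOn (fun χ => h χ m) {χ : Fin M → ℝ | ∀ m', 0 ≤ χ m'})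
    (hh_mono : ∀ m (χ χ' : Fin M → ℝ), (∀ m', 0 ≤ χ m') → (∀ m', χ m' ≤ χ' m') → h χ m ≤ h χ' m)
    (hh_mem : ∀ m (χ : Fin M → ℝ), (∀ m', 0 ≤ χ m') → h χ m ∈ Set.Icc (0:ℝ) 1)
    (X : Ω → Fin M → ℝ) (S : Ω → ℝ) (C : Ω → ℝ≥0∞) (L : Ω → ℝ)
    (hX_nonneg : ∀ ω m, 0 ≤ X ω m) (hS_nonneg : ∀ ω, 0 ≤ S ω) (hC_pos : ∀ ω, 0 < C ω)
    (hL_nonneg : ∀ ω, 0 ≤ L ω)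
    (hX_meas : ∀ m, Measurable fun ω => X ω m) (hS_meas : Measurable S)
    (hC_meas : Measurable C) (hL_meas : Measurable L)
    (hX_int : ∀ m, Integrable fun ω => X ω m) (hS_int : Integrable S)
    :
    (∃ χhat : Fin M → ℝ, (∀ m, 0 ≤ χhat m) ∧ (∀ m, fFS ρc h X C L m χhat = 0) ∧
      (∀ χbar : Fin M → ℝ, (∀ m, 0 ≤ χbar m) → (∀ m, fFS ρc h X C L m χbar = 0) →
        ∀ m, χhat m ≤ χbar m) ∧
      χhat ∈ P0FS ρc h X C L) ∧
    chiStarFS ρ h X C L ∈ P0FS ρ h X C L ∧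
    (∀ m, fFS ρ h X C L m (chiStarFS ρ h X C L) = 0) := by
  have hh0 : ∀ χ : Fin M → ℝ, (∀ m', 0 ≤ χ m') → ∀ m', 0 ≤ h χ m' :=
    fun χ hχ m' => (hh_mem m' χ hχ).1
  have hc_mono : MonotoneOn ρc (Set.Ici 0) := FS.rhoc_mono ρ ρc hρ_mono hρc
  have hc_mem : ∀ u ∈ Set.Ici (0:ℝ), ρc u ∈ Set.Icc (0:ℝ) 1 :=
    fun u hu => FS.rhoc_mem ρ ρc hρ_mem hρc u hu
  constructor
  · -- Part 1: least joint root of the f̊^m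
    classical
    set Φ : (Fin M → ℝ) → Fin M → ℝ := fun χ m => PhiFS ρc h X C L χ m with hΦdef
    set seq : ℕ → Fin M → ℝ := fun k => Φ^[k] 0 with hseqdef
    have hseq_zero : seq 0 = 0 := rfl
    have hseq_succ : ∀ k, seq (k+1) = Φ (seq k) := fun k => Function.iterate_succ_apply' Φ k 0
    have hseq_nonneg : ∀ k m, 0 ≤ seq k m := by
      intro k
      induction k with
      | zero => intro m; rw [hseq_zero]; exact le_rfl
      | succ k ih =>
        intro m
        rw [hseq_succ]
        exact FS.Phi_nonneg hc_mem hX_nonneg hL_nonneg (hh0 _ ih) m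
    have hseq_step : ∀ k m, seq k m ≤ seq (k+1) m := by
      intro k
      induction k with
      | zero =>
        intro m
        rw [hseq_zero, hseq_succ, hseq_zero]
        exact FS.Phi_nonneg hc_mem hX_nonneg hL_nonneg (hh0 _ fun _ => le_rfl) m
      | succ k ih =>
        intro m
        rw [hseq_succ, hseq_succ]
        exact FS.Phi_mono hc_mono hc_mem hh_mono hh_mem hX_nonneg hL_nonneg hX_meas hC_meas
          hL_meas hX_int (hseq_nonneg k) (hseq_nonneg (k+1)) ih m
    have hseq_mono : ∀ m, Monotone fun k => seq k m :=
      fun m => monotone_nat_of_le_succ fun k => hseq_step k m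
    have hseq_bdd : ∀ k m, seq k m ≤ ∫ ω, X ω m := by
      intro k
      cases k with
      | zero => intro m; rw [hseq_zero]; exact integral_nonneg fun ω => hX_nonneg ω m
      | succ k =>
        intro m
        rw [hseq_succ]
        exact FS.Phi_le hc_mono hc_mem hX_nonneg hL_nonneg hX_meas hC_meas hL_meas hX_int
          (hh0 _ (hseq_nonneg k)) m
    set χhat : Fin M → ℝ := fun m => ⨆ k, seq k m with hχhatdef
    have hbdd : ∀ m, BddAbove (Set.range fun k => seq k m) :=
      fun m => ⟨∫ ω, X ω m, by rintro a ⟨k, rfl⟩; exact hseq_bdd k m⟩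
    have hle_hat : ∀ k m, seq k m ≤ χhat m := fun k m => le_ciSup (hbdd m) k
    have hhat_nonneg : ∀ m, 0 ≤ χhat m := fun m => (hseq_nonneg 0 m).trans (hle_hat 0 m)
    have htend : ∀ m, Tendsto (fun k => seq k m) atTop (𝓝 (χhat m)) :=
      fun m => tendsto_atTop_ciSup (hseq_mono m) (hbdd m)
    have htendPi : Tendsto seq atTop (𝓝 χhat) := tendsto_pi_nhds.2 htend
    have hhconv : ∀ m', Tendsto (fun k => h (seq k) m') atTop (𝓝 (h χhat m')) := by
      intro m'
      have hcw : ContinuousWithinAt (fun χ => h χ m') {χ : Fin M → ℝ | ∀ m'', 0 ≤ χ m''} χhat :=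
        (hh_cont m') χhat (fun m'' => hhat_nonneg m'')
      exact hcw.tendsto.comp (tendsto_nhdsWithin_iff.2
        ⟨htendPi, Eventually.of_forall fun k m'' => hseq_nonneg k m''⟩)
    have hfix : ∀ m, PhiFS ρc h X C L χhat m = χhat m := by
      intro m
      have hDCT : Tendsto
          (fun k => ∫ ω, X ω m * ρc ((L ω + ∑ m', X ω m' * h (seq k) m') / (C ω).toReal)) atTop
          (𝓝 (∫ ω, X ω m * ρc ((L ω + ∑ m', X ω m' * h χhat m') / (C ω).toReal))) := by
        refine tendsto_integral_of_dominated_convergence (fun ω => X ω m)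
          (fun k => (FS.integrand_meas hc_mono hX_nonneg hL_nonneg hX_meas hC_meas hL_meas
            (hh0 _ (hseq_nonneg k)) m).aestronglyMeasurable)
          (hX_int m) (fun k => ae_of_all _ fun ω => ?_) (ae_of_all _ fun ω => ?_)
        · have hmem := hc_mem _ (FS.arg_nonneg (C := C) hX_nonneg hL_nonneg (hh0 _ (hseq_nonneg k)) ω)
          rw [norm_mul, Real.norm_eq_abs, Real.norm_eq_abs, abs_of_nonneg (hX_nonneg ω m),
            abs_of_nonneg hmem.1]
          calc X ω m * ρc _ ≤ X ω m * 1 := mul_le_mul_of_nonneg_left hmem.2 (hX_nonneg ω m)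
          _ = X ω m := mul_one _
        · have hargT : Tendsto
              (fun k => (L ω + ∑ m', X ω m' * h (seq k) m') / (C ω).toReal) atTop
              (𝓝 ((L ω + ∑ m', X ω m' * h χhat m') / (C ω).toReal)) := by
            exact (tendsto_const_nhds.add
              (tendsto_finset_sum _ fun m' _ => tendsto_const_nhds.mul (hhconv m'))).div_const _
          have hρcT := FS.rhoc_leftcont ρ ρc hρ_mono hρc
            ((L ω + ∑ m', X ω m' * h χhat m') / (C ω).toReal)
            (FS.arg_nonneg (C := C) hX_nonneg hL_nonneg (hh0 _ hhat_nonneg) ω)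
            (fun k => (L ω + ∑ m', X ω m' * h (seq k) m') / (C ω).toReal)
            (fun k => FS.arg_nonneg (C := C) hX_nonneg hL_nonneg (hh0 _ (hseq_nonneg k)) ω)
            (fun k => FS.arg_mono hX_nonneg
              (fun m' => hh_mono m' _ _ (hseq_nonneg k) (fun m'' => hle_hat k m'')) ω)
            hargT
          exact tendsto_const_nhds.mul hρcT
      have h2 : ∀ k, seq (k+1) m
          = ∫ ω, X ω m * ρc ((L ω + ∑ m', X ω m' * h (seq k) m') / (C ω).toReal) := by
        intro k; rw [hseq_succ]; rfl
      have h3 : Tendsto (fun k => seq (k+1) m) atTop (𝓝 (PhiFS ρc h X C L χhat m)) := by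
        simp only [h2]; exact hDCT
      have h4 : Tendsto (fun k => seq (k+1) m) atTop (𝓝 (χhat m)) :=
        (htend m).comp (tendsto_add_atTop_nat 1)
      exact tendsto_nhds_unique h3 h4
    have hroot : ∀ m, fFS ρc h X C L m χhat = 0 := by
      intro m; rw [fFS_eq_Phi, hfix m, sub_self]
    have hhatP : χhat ∈ PsetFS ρc h X C L :=
      FS.mem_Pset.2 ⟨hhat_nonneg, fun m => (hfix m).ge⟩
    have h0P : (0 : Fin M → ℝ) ∈ PsetFS ρc h X C L :=
      FS.zero_mem_Pset hc_mem hh_mem hX_nonneg hL_nonneg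
    have hPk : ∀ k, seq k ∈ PsetFS ρc h X C L := by
      intro k
      refine FS.mem_Pset.2 ⟨hseq_nonneg k, fun m => ?_⟩
      have := hseq_step k m
      rwa [hseq_succ] at this
    -- the polygonal chain
    set s : ℕ → Set (Fin M → ℝ) := fun k => Set.Icc (seq k) (seq (k+1)) with hsdef
    have hU_conn : IsPreconnected (⋃ k, s k) := by
      refine IsPreconnected.iUnion_of_chain (fun k => FS.Icc_preconnected _ _) (fun k => ?_)
      exact ⟨seq (k+1), ⟨fun m => hseq_step k m, le_rfl⟩, ⟨le_rfl, fun m => hseq_step (k+1) m⟩⟩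
    have hU_sub : (⋃ k, s k) ⊆ PsetFS ρc h X C L := by
      refine Set.iUnion_subset fun k ξ hξ => ?_
      refine FS.box_mem hc_mono hc_mem hh_mono hh_mem hX_nonneg hL_nonneg hX_meas hC_meas hL_meas
        hX_int (hPk k) (fun m => hξ.1 m) (fun m => ?_)
      have := hξ.2 m
      rwa [hseq_succ] at this
    have hhat_cl : χhat ∈ closure (⋃ k, s k) := by
      refine mem_closure_of_tendsto htendPi (Eventually.of_forall fun k => ?_)
      exact Set.mem_iUnion.2 ⟨k, le_rfl, fun m => hseq_step k m⟩
    have hT_conn : IsPreconnected (insert χhat (⋃ k, s k)) :=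
      hU_conn.subset_closure (Set.subset_insert _ _)
        (Set.insert_subset_iff.2 ⟨hhat_cl, subset_closure⟩)
    have hT_sub : insert χhat (⋃ k, s k) ⊆ PsetFS ρc h X C L :=
      Set.insert_subset_iff.2 ⟨hhatP, hU_sub⟩
    have h0T : (0 : Fin M → ℝ) ∈ insert χhat (⋃ k, s k) := by
      refine Set.mem_insert_of_mem _ (Set.mem_iUnion.2 ⟨0, ?_⟩)
      exact ⟨le_of_eq hseq_zero.symm, fun m => by rw [← hseq_zero]; exact hseq_step 0 m⟩
    have h0P0 : (0 : Fin M → ℝ) ∈ P0FS ρc h X C L := mem_connectedComponentIn h0P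
    have hhatP0 : χhat ∈ P0FS ρc h X C L :=
      FS.absorb hT_conn hT_sub h0T h0P0 (Set.mem_insert _ _)
    refine ⟨χhat, hhat_nonneg, hroot, ?_, hhatP0⟩
    -- minimality
    intro χbar hbar0 hbarroot m
    have hbarfix : ∀ m, PhiFS ρc h X C L χbar m = χbar m := by
      intro m
      have := hbarroot m
      rw [fFS_eq_Phi] at this
      linarith
    have hkle : ∀ k m, seq k m ≤ χbar m := by
      intro k
      induction k with
      | zero => intro m; rw [hseq_zero]; exact hbar0 m
      | succ k ih =>
        intro m
        rw [hseq_succ]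
        calc Φ (seq k) m ≤ PhiFS ρc h X C L χbar m :=
              FS.Phi_mono hc_mono hc_mem hh_mono hh_mem hX_nonneg hL_nonneg hX_meas hC_meas
                hL_meas hX_int (hseq_nonneg k) hbar0 ih m
        _ = χbar m := hbarfix m
    exact ciSup_le fun k => hkle k m
  · -- Part 2: χ* ∈ P₀ and f(χ*) = 0
    classical
    have h0P : (0 : Fin M → ℝ) ∈ PsetFS ρ h X C L :=
      FS.zero_mem_Pset hρ_mem hh_mem hX_nonneg hL_nonneg
    have h0P0 : (0 : Fin M → ℝ) ∈ P0FS ρ h X C L := mem_connectedComponentIn h0P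
    have hP0_sub : P0FS ρ h X C L ⊆ PsetFS ρ h X C L := connectedComponentIn_subset _ _
    set χs : Fin M → ℝ := chiStarFS ρ h X C L with hχsdef
    have hA_ne : ∀ m : Fin M, ((fun χ : Fin M → ℝ => χ m) '' P0FS ρ h X C L).Nonempty :=
      fun m => ⟨(0 : Fin M → ℝ) m, Set.mem_image_of_mem _ h0P0⟩
    have hA_bdd : ∀ m : Fin M, BddAbove ((fun χ : Fin M → ℝ => χ m) '' P0FS ρ h X C L) := by
      intro m
      refine ⟨∫ ω, X ω m, ?_⟩
      rintro a ⟨χ, hχ, rfl⟩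
      obtain ⟨hχ0, hχΦ⟩ := FS.mem_Pset.1 (hP0_sub hχ)
      exact (hχΦ m).trans (FS.Phi_le hρ_mono hρ_mem hX_nonneg hL_nonneg hX_meas hC_meas hL_meas
        hX_int (hh0 _ hχ0) m)
    have hub : ∀ χ ∈ P0FS ρ h X C L, ∀ m, χ m ≤ χs m :=
      fun χ hχ m => le_csSup (hA_bdd m) (Set.mem_image_of_mem _ hχ)
    have hχs_nonneg : ∀ m, 0 ≤ χs m := fun m => hub 0 h0P0 m
    have hχs_P : χs ∈ PsetFS ρ h X C L := by
      refine FS.mem_Pset.2 ⟨hχs_nonneg, fun m => csSup_le (hA_ne m) ?_⟩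
      rintro a ⟨χ, hχ, rfl⟩
      obtain ⟨hχ0, hχΦ⟩ := FS.mem_Pset.1 (hP0_sub hχ)
      exact (hχΦ m).trans (FS.Phi_mono hρ_mono hρ_mem hh_mono hh_mem hX_nonneg hL_nonneg hX_meas
        hC_meas hL_meas hX_int hχ0 hχs_nonneg (fun m' => hub χ hχ m') m)
    have hsup_closed : ∀ χ ∈ P0FS ρ h X C L, ∀ χ' ∈ P0FS ρ h X C L,
        (fun m => max (χ m) (χ' m)) ∈ P0FS ρ h X C L := by
      intro χ hχ χ' hχ'
      have hχ0 : ∀ m, 0 ≤ χ m := (FS.mem_Pset.1 (hP0_sub hχ)).1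
      set q : (Fin M → ℝ) → (Fin M → ℝ) := fun ξ m => max (χ m) (ξ m) with hqdef
      have hqcont : Continuous q := continuous_pi fun m => continuous_const.max (continuous_apply m)
      have himg : IsPreconnected (q '' P0FS ρ h X C L) :=
        (isPreconnected_connectedComponentIn).image q hqcont.continuousOn
      have himgP : q '' P0FS ρ h X C L ⊆ PsetFS ρ h X C L := by
        rintro _ ⟨ξ, hξ, rfl⟩
        exact FS.sup_mem hρ_mono hρ_mem hh_mono hh_mem hX_nonneg hL_nonneg hX_meas hC_meas
          hL_meas hX_int (hP0_sub hχ) (hP0_sub hξ)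
      have hχ_img : χ ∈ q '' P0FS ρ h X C L :=
        ⟨0, h0P0, funext fun m => by simp [hqdef, max_eq_left (hχ0 m)]⟩
      exact FS.absorb himg himgP hχ_img hχ ⟨χ', hχ', rfl⟩
    have hχs_cl : χs ∈ closure (P0FS ρ h X C L) := by
      rw [Metric.mem_closure_iff]
      intro ε hε
      have key : ∀ t : Finset (Fin M), ∃ ζ ∈ P0FS ρ h X C L, ∀ m ∈ t, χs m - ε/2 < ζ m := by
        intro t
        induction t using Finset.induction_on with
        | empty => exact ⟨0, h0P0, by simp⟩
        | insert _ _ hm ih =>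
          rename_i m t
          obtain ⟨ζ, hζ, hζ2⟩ := ih
          obtain ⟨a, ⟨ξ, hξ, rfl⟩, hlt⟩ :=
            exists_lt_of_lt_csSup (hA_ne m) (show χs m - ε/2 < χs m from sub_lt_self _ (half_pos hε))
          refine ⟨fun m' => max (ξ m') (ζ m'), hsup_closed ξ hξ ζ hζ, ?_⟩
          intro m' hm'
          rcases Finset.mem_insert.1 hm' with rfl | hm't
          · exact lt_of_lt_of_le hlt (le_max_left _ _)
          · exact lt_of_lt_of_le (hζ2 m' hm't) (le_max_right _ _)
      obtain ⟨ζ, hζP0, hζ⟩ := key Finset.univ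
      refine ⟨ζ, hζP0, ?_⟩
      rw [dist_pi_lt_iff hε]
      intro m
      rw [Real.dist_eq, abs_lt]
      constructor
      · linarith [hub ζ hζP0 m]
      · linarith [hζ m (Finset.mem_univ m)]
    have hχs_P0 : χs ∈ P0FS ρ h X C L := by
      have hT_conn : IsPreconnected (insert χs (P0FS ρ h X C L)) :=
        isPreconnected_connectedComponentIn.subset_closure (Set.subset_insert _ _)
          (Set.insert_subset_iff.2 ⟨hχs_cl, subset_closure⟩)
      have hT_sub : insert χs (P0FS ρ h X C L) ⊆ PsetFS ρ h X C L :=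
        Set.insert_subset_iff.2 ⟨hχs_P, hP0_sub⟩
      exact FS.absorb hT_conn hT_sub (Set.mem_insert_of_mem _ h0P0) h0P0 (Set.mem_insert _ _)
    have hΦχs_P0 : (fun m => PhiFS ρ h X C L χs m) ∈ P0FS ρ h X C L := by
      have hχsΦ : ∀ m, χs m ≤ PhiFS ρ h X C L χs m := (FS.mem_Pset.1 hχs_P).2
      have hbox_sub : Set.Icc χs (fun m => PhiFS ρ h X C L χs m) ⊆ PsetFS ρ h X C L := by
        intro ξ hξ
        exact FS.box_mem hρ_mono hρ_mem hh_mono hh_mem hX_nonneg hL_nonneg hX_meas hC_meas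
          hL_meas hX_int hχs_P (fun m => hξ.1 m) (fun m => hξ.2 m)
      have hχs_mem : χs ∈ Set.Icc χs (fun m => PhiFS ρ h X C L χs m) :=
        ⟨le_rfl, fun m => hχsΦ m⟩
      have := FS.absorb (FS.Icc_preconnected _ _) hbox_sub hχs_mem hχs_P0
      exact this ⟨fun m => hχsΦ m, le_rfl⟩
    refine ⟨hχs_P0, fun m => ?_⟩
    rw [fFS_eq_Phi]
    have h1 : PhiFS ρ h X C L χs m ≤ χs m := hub _ hΦχs_P0 m
    have h2 : χs m ≤ PhiFS ρ h X C L χs m := (FS.mem_Pset.1 hχs_P).2 m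
    linarith
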